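/- If (α, β) ∈ ℝ² satisfies (k/(2c)) d_θ α > α² + β² (the region 𝒟_S), then Q_S^θ(α, β) = 2 c₁ k (a_θ α − b_θ β) + c k² (1 − d_θ²/(4c²)) + ē_S, and the infimum defining Q_S^θ(α, β) is attained at γ = (k/(2c)) d_θ − α. -/

import Mathlib

/-- Splay-bend-case context: `c = c₁ + c₂`, `aθ = cos 2θ`, `bθ = sin 2θ`,
`dθ = c₁ aθ − c − c₂`,
`fS α β γ = c(α² + 2β² + γ²) + 2c|αγ − β²| − k dθ (α + γ) + 2c₁ k (aθ α − bθ β) + c k² + ē_S`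
and `Q α β = ⨅ γ, fS α β γ`. -/
theorem stmt9 (c₁ c₂ k θ eS : ℝ) (hc₁ : 0 < c₁) (hc₂ : 0 < c₂)
    (hθ : 0 ≤ θ ∧ θ < Real.pi) (heS : 0 ≤ eS)
    (c aθ bθ dθ : ℝ) (hc : c = c₁ + c₂)
    (haθ : aθ = Real.cos (2 * θ)) (hbθ : bθ = Real.sin (2 * θ))
    (hdθ : dθ = c₁ * aθ - c - c₂)
    (fS : ℝ → ℝ → ℝ → ℝ)
    (hfS : ∀ α β γ : ℝ, fS α β γ =
      c * (α ^ 2 + 2 * β ^ 2 + γ ^ 2) + 2 * c * |α * γ - β ^ 2|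
        - k * dθ * (α + γ) + 2 * c₁ * k * (aθ * α - bθ * β) + c * k ^ 2 + eS)
    (Q : ℝ → ℝ → ℝ) (hQ : ∀ α β : ℝ, Q α β = ⨅ γ : ℝ, fS α β γ)
    (α β : ℝ) (hreg : (k / (2 * c)) * dθ * α > α ^ 2 + β ^ 2) :
    Q α β = 2 * c₁ * k * (aθ * α - bθ * β) + c * k ^ 2 * (1 - dθ ^ 2 / (4 * c ^ 2)) + eS ∧
    fS α β ((k / (2 * c)) * dθ - α) = Q α β := by
  have hcpos : 0 < c := by rw [hc]; linarith
  have hc0 : c ≠ 0 := ne_of_gt hcpos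
  set V : ℝ := 2 * c₁ * k * (aθ * α - bθ * β) + c * k ^ 2 * (1 - dθ ^ 2 / (4 * c ^ 2)) + eS with hV
  set D : ℝ := dθ ^ 2 / (4 * c ^ 2) with hD
  have hDeq : 4 * c ^ 2 * D = dθ ^ 2 := by rw [hD]; field_simp
  -- lower bound
  have hlow : ∀ γ : ℝ, V ≤ fS α β γ := by
    intro γ
    rw [hfS]
    have habs : α * γ - β ^ 2 ≤ |α * γ - β ^ 2| := le_abs_self _
    nlinarith [sq_nonneg (2 * c * (α + γ) - k * dθ), mul_pos hcpos hcpos,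
      mul_le_mul_of_nonneg_left habs (le_of_lt hcpos)]
  -- value at the minimizer
  have hval : fS α β ((k / (2 * c)) * dθ - α) = V := by
    rw [hfS]
    have hpos : 0 < α * ((k / (2 * c)) * dθ - α) - β ^ 2 := by nlinarith
    rw [abs_of_pos hpos, hV, hD]
    field_simp
    ring
  have hbdd : BddBelow (Set.range (fS α β)) := ⟨V, by rintro x ⟨γ, rfl⟩; exact hlow γ⟩
  have hQV : Q α β = V := by
    rw [hQ]
    apply le_antisymm
    · calc ⨅ γ : ℝ, fS α β γ ≤ fS α β ((k / (2 * c)) * dθ - α) := ciInf_le hbdd _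
        _ = V := hval
    · exact le_ciInf hlow
  exact ⟨hQV, by rw [hval, hQV]⟩
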